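/- Polynomials f₁, …, f_n ∈ C[x₁, …, x_n] are algebraically independent over C if the determinant of the Jacobian matrix (∂f_i/∂x_j) is a nonzero polynomial. -/

import Mathlib

open MvPolynomial

private lemma coeff_pderiv' {n : ℕ} (P : MvPolynomial (Fin n) ℂ) (i : Fin n) (m : Fin n →₀ ℕ) :
    coeff m (pderiv i P) = ((m i + 1 : ℕ) : ℂ) * coeff (m + Finsupp.single i 1) P := by
  induction P using MvPolynomial.induction_on' with
  | add p q hp hq => simp [hp, hq, mul_add]
  | monomial s a =>
    rw [pderiv_monomial, coeff_monomial, coeff_monomial]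
    by_cases hs : s = m + Finsupp.single i 1
    · subst hs
      rw [if_pos (add_tsub_cancel_right _ _), if_pos rfl]
      simp [mul_comm]
    · rw [if_neg hs]
      by_cases h2 : s - Finsupp.single i 1 = m
      · rw [if_pos h2]
        have hsi : s i = 0 := by
          by_contra hne
          apply hs
          have hle : Finsupp.single i 1 ≤ s :=
            Finsupp.single_le_iff.mpr (Nat.one_le_iff_ne_zero.mpr hne)
          rw [← h2, tsub_add_cancel_of_le hle]
        simp [hsi]
      · rw [if_neg h2, mul_zero]

private lemma eq_C_of_pderiv_eq_zero' {n : ℕ} (P : MvPolynomial (Fin n) ℂ)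
    (h : ∀ i, pderiv i P = 0) : P = C (coeff 0 P) := by
  ext m
  rw [coeff_C]
  by_cases hm : (0 : Fin n →₀ ℕ) = m
  · rw [if_pos hm, ← hm]
  · rw [if_neg hm]
    obtain ⟨i, hi⟩ : ∃ i, m i ≠ 0 := by
      by_contra hall
      push_neg at hall
      exact hm (by ext a; exact (hall a).symm)
    have hle : Finsupp.single i 1 ≤ m := Finsupp.single_le_iff.mpr (Nat.one_le_iff_ne_zero.mpr hi)
    have hc := coeff_pderiv' P i (m - Finsupp.single i 1)
    rw [h i, tsub_add_cancel_of_le hle] at hc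
    simp only [coeff_zero] at hc
    have hcast : (((m - Finsupp.single i 1 : Fin n →₀ ℕ) i + 1 : ℕ) : ℂ) ≠ 0 :=
      Nat.cast_ne_zero.mpr (Nat.succ_ne_zero _)
    exact ((mul_eq_zero.mp hc.symm).resolve_left hcast)

private lemma pderiv_aeval' {n : ℕ} (f : Fin n → MvPolynomial (Fin n) ℂ) (j : Fin n)
    (P : MvPolynomial (Fin n) ℂ) :
    pderiv j (aeval f P) = ∑ i, aeval f (pderiv i P) * pderiv j (f i) := by
  induction P using MvPolynomial.induction_on with
  | C a => simp
  | add p q hp hq =>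
    rw [map_add, map_add, hp, hq, ← Finset.sum_add_distrib]
    exact Finset.sum_congr rfl fun i _ => by rw [map_add, map_add, add_mul]
  | mul_X p k hp =>
    have hR : ∀ i : Fin n, aeval f (pderiv i (p * X k)) * pderiv j (f i)
        = aeval f (pderiv i p) * pderiv j (f i) * f k
          + (if k = i then aeval f p * pderiv j (f i) else 0) := by
      intro i
      rw [pderiv_mul, map_add, map_mul, map_mul, aeval_X]
      by_cases hik : k = i
      · subst hik
        rw [pderiv_X_self, if_pos rfl, map_one, mul_one, add_mul]
        ring
      · rw [pderiv_X_of_ne hik, map_zero, mul_zero, add_zero, if_neg hik]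
        ring
    rw [Finset.sum_congr rfl fun i _ => hR i, Finset.sum_add_distrib, Finset.sum_ite_eq,
      if_pos (Finset.mem_univ k), ← Finset.sum_mul, ← hp, map_mul, aeval_X, pderiv_mul]

private lemma totalDegree_pderiv_lt' {n : ℕ} (P : MvPolynomial (Fin n) ℂ) (i : Fin n)
    (hne : pderiv i P ≠ 0) : (pderiv i P).totalDegree < P.totalDegree := by
  have hsupp : (pderiv i P).support.Nonempty := support_nonempty.mpr hne
  obtain ⟨m, hm, heq⟩ := Finset.exists_mem_eq_sup _ hsupp (fun m => m.sum fun _ e => e)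
  rw [totalDegree, heq]
  have hc : coeff (m + Finsupp.single i 1) P ≠ 0 := by
    intro h0
    have hcp := coeff_pderiv' P i m
    rw [h0, mul_zero] at hcp
    exact (mem_support_iff.mp hm) hcp
  have hle := le_totalDegree (mem_support_iff.mpr hc)
  have hsum : ((m + Finsupp.single i 1).sum fun _ e => e) = (m.sum fun _ e => e) + 1 := by
    rw [Finsupp.sum_add_index (by simp) (by intros; rfl)]
    simp
  omega

/-- Jacobian criterion: `n` polynomials in `n` variables over `ℂ` are algebraically
independent if the determinant of the Jacobian matrix `(∂f_i/∂x_j)` is nonzero. -/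
theorem jacobian_criterion (n : ℕ) (f : Fin n → MvPolynomial (Fin n) ℂ)
    (h : (Matrix.of fun i j => pderiv j (f i)).det ≠ 0) :
    AlgebraicIndependent ℂ f := by
  rw [algebraicIndependent_iff]
  suffices key : ∀ d (P : MvPolynomial (Fin n) ℂ), P.totalDegree = d → aeval f P = 0 → P = 0 by
    intro P hP
    exact key P.totalDegree P rfl hP
  intro d
  induction d using Nat.strong_induction_on with
  | _ d IH =>
    intro P hdeg hP
    set M : Matrix (Fin n) (Fin n) (MvPolynomial (Fin n) ℂ) :=
      Matrix.of fun i j => pderiv j (f i) with hM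
    have hderiv0 : ∀ i, aeval f (pderiv i P) = 0 := by
      have hv : Matrix.vecMul (fun i => aeval f (pderiv i P)) M = 0 := by
        funext j
        have hcr := pderiv_aeval' f j P
        rw [hP, map_zero] at hcr
        simpa [Matrix.vecMul, dotProduct, hM, mul_comm] using hcr.symm
      have h2 := congrArg (fun w => Matrix.vecMul w M.adjugate) hv
      simp only [Matrix.vecMul_vecMul, Matrix.mul_adjugate, Matrix.zero_vecMul] at h2
      intro i
      have h3 := congrFun h2 i
      have h4 : M.det * aeval f (pderiv i P) = 0 := by
        have h3' : Matrix.vecMul (fun i => aeval f (pderiv i P)) (M.det • 1) i = 0 := by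
          rw [h3]; rfl
        rw [← h3']
        simp [Matrix.vecMul, dotProduct, Matrix.one_apply, mul_ite]
        ring
      exact (mul_eq_zero.mp h4).resolve_left h
    have hpz : ∀ i, pderiv i P = 0 := by
      intro i
      by_contra hne
      have hlt := totalDegree_pderiv_lt' P i hne
      rw [hdeg] at hlt
      exact hne (IH _ hlt _ rfl (hderiv0 i))
    have hPC := eq_C_of_pderiv_eq_zero' P hpz
    rw [hPC] at hP ⊢
    rw [aeval_C] at hP
    have : coeff 0 P = 0 := by
      simpa using hP
    rw [this, map_zero]
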